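/- Let Γ ⊆ Aut(Cay(ℤ², E)) be a nontrivial subgroup such that γ(0) = 0 for all γ ∈ Γ and ⟨γ(n,m)⟩⁻¹ γ ⟨n,m⟩ ∈ Γ for all γ ∈ Γ and (n,m) ∈ ℤ² (any such Γ is finite). Then S̃_Γ, with the quotient Borel structure on Fr_Γ/Γ, is not the Schreier graph of a free Borel action of ℤ². -/

import Mathlib

namespace Paper

variable {X Y : Type*}

/-- A (simple, undirected) graph on `X`: a symmetric irreflexive set of ordered pairs. -/
def IsGraph (G : Set (X × X)) : Prop :=
  (∀ x y, (x, y) ∈ G → (y, x) ∈ G) ∧ ∀ x, (x, x) ∉ G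

/-- Connectedness (same component) relation of a graph. -/
def Conn (G : Set (X × X)) : X → X → Prop :=
  Relation.ReflTransGen fun x y => (x, y) ∈ G

/-- The reversal of a directed edge. -/
def neg (e : X × X) : X × X := (e.2, e.1)

end Paper
namespace Paper

variable {X Y : Type*}

/-- A (simple, directed) path in a graph, as a nonempty list of distinct
consecutively-adjacent vertices. -/
def IsPathL (G : Set (X × X)) (p : List X) : Prop :=
  p ≠ [] ∧ p.Nodup ∧ p.Chain' fun a b => (a, b) ∈ G

/-- A straight line (segment): a directed path such that no other path of the same
or shorter length has the same endpoints. -/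
def IsStraight (G : Set (X × X)) (p : List X) : Prop :=
  IsPathL G p ∧ ∀ q : List X, IsPathL G q → q.head? = p.head? →
    q.getLast? = p.getLast? → q.length ≤ p.length → q = p

/-- The directed edges `e` and `e'` lie on a common straight line. -/
def OnLine (G : Set (X × X)) (e e' : X × X) : Prop :=
  ∃ p, IsStraight G p ∧ [e.1, e.2] <:+: p ∧ [e'.1, e'.2] <:+: p

/-- The vertices `x` and `y` lie on a common straight line. -/
def VertsOnLine (G : Set (X × X)) (x y : X) : Prop :=
  ∃ p, IsStraight G p ∧ x ∈ p ∧ y ∈ p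

/-- A rectangle: a simple directed cycle divided into 4 straight lines. -/
def IsRect (G : Set (X × X)) (p₁ p₂ p₃ p₄ : List X) : Prop :=
  IsStraight G p₁ ∧ IsStraight G p₂ ∧ IsStraight G p₃ ∧ IsStraight G p₄ ∧
  p₁.getLast? = p₂.head? ∧ p₂.getLast? = p₃.head? ∧
  p₃.getLast? = p₄.head? ∧ p₄.getLast? = p₁.head? ∧
  (p₁ ++ p₂.tail ++ p₃.tail ++ p₄.tail).dropLast.Nodup

/-- `e ∥ e'`: the directed edges lie on a common straight line, or `-e` and `e'`
are opposite sides of a rectangle. -/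
def Parallel (G : Set (X × X)) (e e' : X × X) : Prop :=
  OnLine G e e' ∨
  ∃ p₁ p₂ p₃ p₄, IsRect G p₁ p₂ p₃ p₄ ∧
    (([e.2, e.1] <:+: p₁ ∧ [e'.1, e'.2] <:+: p₃) ∨
     ([e.2, e.1] <:+: p₃ ∧ [e'.1, e'.2] <:+: p₁) ∨
     ([e.2, e.1] <:+: p₂ ∧ [e'.1, e'.2] <:+: p₄) ∨
     ([e.2, e.1] <:+: p₄ ∧ [e'.1, e'.2] <:+: p₂))

/-- `e ⊥ e'`: directed edges of `G` in the same component which are neither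
parallel nor anti-parallel. -/
def Perp (G : Set (X × X)) (e e' : X × X) : Prop :=
  e ∈ G ∧ e' ∈ G ∧ Conn G e.1 e'.1 ∧ ¬ Parallel G e e' ∧ ¬ Parallel G (neg e) e'

/-- Adjacency in the Cayley graph of `ℤ²` with the standard generating set. -/
def LatAdj (p q : ℤ × ℤ) : Prop :=
  q = p + (1, 0) ∨ q = p + (-1, 0) ∨ q = p + (0, 1) ∨ q = p + (0, -1)

/-- A graph is locally a square lattice if every connected component is
isomorphic to the Cayley graph of `ℤ²` with the standard generating set. -/
def LocallySquareLattice (G : Set (X × X)) : Prop :=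
  ∀ x : X, ∃ φ : ℤ × ℤ → X, Function.Injective φ ∧ φ 0 = x ∧
    (∀ p q, LatAdj p q ↔ (φ p, φ q) ∈ G) ∧
    ∀ y, Conn G x y → ∃ p, φ p = y

/-- A Borel 2-coloring of the perpendicularity graph `⊥_G`. -/
def HasBorelTwoColoring [MeasurableSpace X] (G : Set (X × X)) : Prop :=
  ∃ c : X × X → Bool, Measurable c ∧ ∀ e e', Perp G e e' → c e ≠ c e'

/-- The standard generating set of `ℤ²`. -/
def stdGen : Set (ℤ × ℤ) := {(1, 0), (-1, 0), (0, 1), (0, -1)}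

/-- `G` is the Schreier graph of a free Borel action of `ℤ²` (with the standard
generating set). -/
def IsSchreierZ2 [MeasurableSpace X] (G : Set (X × X)) : Prop :=
  ∃ a : ℤ × ℤ → X → X,
    (∀ g, Measurable (a g)) ∧
    (∀ x, a 0 x = x) ∧
    (∀ g h x, a (g + h) x = a g (a h x)) ∧
    (∀ g x, a g x = x → g = 0) ∧
    G = {p | ∃ g ∈ stdGen, p.2 = a g p.1}

end Paper
namespace Paper

/-- The automorphism group of the Cayley graph of `ℤ²` (with the standard
generating set), as a subgroup of the permutations of `ℤ²`. -/
def latAut : Subgroup (Equiv.Perm (ℤ × ℤ)) where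
  carrier := {γ | ∀ p q, LatAdj p q ↔ LatAdj (γ p) (γ q)}
  one_mem' := by intro p q; exact Iff.rfl
  mul_mem' := by
    intro a b ha hb p q
    simpa [Equiv.Perm.mul_apply] using (hb p q).trans (ha (b p) (b q))
  inv_mem' := by
    intro a ha p q
    simpa using (ha (a⁻¹ p) (a⁻¹ q)).symm

/-- The translation automorphism `⟨v⟩` of the Cayley graph of `ℤ²`. -/
def trAut (v : ℤ × ℤ) : Equiv.Perm (ℤ × ℤ) := Equiv.addLeft v

/-- The shift action of `Aut(Cay(ℤ², E))` on `[0,1]^{ℤ²}`: `γ · x = x ∘ γ⁻¹`. -/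
def shiftI (g : Equiv.Perm (ℤ × ℤ)) (x : (ℤ × ℤ) → unitInterval) :
    (ℤ × ℤ) → unitInterval := fun p => x (g⁻¹ p)

/-- The free part of the shift action of `Aut(Cay(ℤ², E))` on `[0,1]^{ℤ²}`. -/
def FrSet : Set ((ℤ × ℤ) → unitInterval) :=
  {x | ∀ g ∈ latAut, g ≠ 1 → shiftI g x ≠ x}

/-- A point of the free part. -/
abbrev FrPt : Type := {x : (ℤ × ℤ) → unitInterval // x ∈ FrSet}

/-- The orbit equivalence relation of (the restriction to) `Γ` on the free part. -/
def frSetoid (Γ : Subgroup (Equiv.Perm (ℤ × ℤ))) : Setoid FrPt where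
  r x y := ∃ γ ∈ Γ, shiftI γ x.val = y.val
  iseqv := by
    constructor
    · intro x
      exact ⟨1, Γ.one_mem, by funext p; simp [shiftI]⟩
    · rintro x y ⟨γ, hγ, h⟩
      refine ⟨γ⁻¹, Γ.inv_mem hγ, ?_⟩
      funext p
      rw [← h]
      simp [shiftI]
    · rintro x y z ⟨γ, hγ, h⟩ ⟨δ, hδ, h'⟩
      refine ⟨δ * γ, Γ.mul_mem hδ hγ, ?_⟩
      rw [← h', ← h]
      funext p
      simp [shiftI, mul_inv_rev, Equiv.Perm.mul_apply]

/-- The graph `S̃_Γ` on `Fr_Γ/Γ`, with edges `([x], [⟨v⟩ · x])` for `v` in the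
standard generating set. -/
def Stilde (Γ : Subgroup (Equiv.Perm (ℤ × ℤ))) :
    Set (Quotient (frSetoid Γ) × Quotient (frSetoid Γ)) :=
  {p | ∃ (x : FrPt) (v : ℤ × ℤ), v ∈ stdGen ∧
    ∃ hv : shiftI (trAut v) x.val ∈ FrSet,
      p.1 = Quotient.mk (frSetoid Γ) x ∧
      p.2 = Quotient.mk (frSetoid Γ) ⟨shiftI (trAut v) x.val, hv⟩}

end Paper

namespace NS
open Paper

/-- generator predicate -/
def IsGen (v : ℤ × ℤ) : Prop := v = (1,0) ∨ v = (-1,0) ∨ v = (0,1) ∨ v = (0,-1)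

lemma latAdj_iff {p q : ℤ × ℤ} : LatAdj p q ↔ IsGen (q - p) := by
  simp [LatAdj, IsGen, Prod.ext_iff]
  omega

/-- the linear map with matrix columns A B -/
def lmap (A B p : ℤ × ℤ) : ℤ × ℤ := (p.1 * A.1 + p.2 * B.1, p.1 * A.2 + p.2 * B.2)

lemma lmap_add (A B p q : ℤ × ℤ) : lmap A B (p + q) = lmap A B p + lmap A B q := by
  simp [lmap, Prod.ext_iff]; constructor <;> ring

lemma lmap_e1 (A B : ℤ × ℤ) : lmap A B (1,0) = A := by simp [lmap]
lemma lmap_e2 (A B : ℤ × ℤ) : lmap A B (0,1) = B := by simp [lmap]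

lemma lgen {A B : ℤ × ℤ} (hgA : IsGen A) (hgB : IsGen B) :
    ∀ v, IsGen v → IsGen (lmap A B v) := by
  intro v hv
  rcases hgA with h|h|h|h <;> subst h <;> rcases hgB with h|h|h|h <;> subst h <;>
    rcases hv with h|h|h|h <;> subst h <;> simp [IsGen, lmap, Prod.ext_iff]

lemma ladjL {A B : ℤ × ℤ} (hgA : IsGen A) (hgB : IsGen B) :
    ∀ u v, LatAdj u v → LatAdj (lmap A B u) (lmap A B v) := by
  intro u v huv
  rw [latAdj_iff] at huv ⊢
  have : lmap A B v - lmap A B u = lmap A B (v - u) := by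
    simp [lmap, Prod.ext_iff]; constructor <;> ring
  rw [this]; exact lgen hgA hgB _ huv

lemma linj {A B : ℤ × ℤ} (hgA : IsGen A) (hgB : IsGen B) (hBA : B ≠ A) (hBA' : B ≠ -A) :
    ∀ u v : ℤ × ℤ, lmap A B u = lmap A B v → u = v := by
  intro u v huv
  rcases hgA with h|h|h|h <;> subst h <;> rcases hgB with h|h|h|h <;> subst h <;>
    simp [lmap, Prod.ext_iff] at huv hBA hBA' ⊢ <;> omega

section rigid

variable {f : ℤ × ℤ → ℤ × ℤ}

/-- Main rigidity lemma. -/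
theorem rigid (hinj : Function.Injective f) (hsurj : Function.Surjective f)
    (hadj : ∀ p q, LatAdj p q ↔ LatAdj (f p) (f q)) (h0 : f 0 = 0) :
    (∀ p, f p = lmap (f (1,0)) (f (0,1)) p) ∧ IsGen (f (1,0)) ∧ IsGen (f (0,1)) ∧
      f (0,1) ≠ f (1,0) ∧ f (0,1) ≠ -f (1,0) := by
  have hgen : ∀ v, IsGen v → IsGen (f v) := by
    intro v hv
    have : LatAdj 0 v := by rw [latAdj_iff]; simpa using hv
    have := (hadj 0 v).1 this
    rw [h0] at this
    rw [latAdj_iff] at this; simpa using this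
  have hgA : IsGen (f (1,0)) := hgen _ (by left; rfl)
  have hgB : IsGen (f (0,1)) := hgen _ (by right; right; left; rfl)
  -- common neighbours of opposite pairs
  have cn_opp : ∀ v, IsGen v → ∀ r, LatAdj v r → LatAdj (-v) r → r = 0 := by
    intro v hv r h1 h2
    rw [latAdj_iff] at h1 h2
    rcases hv with h|h|h|h <;> subst h <;>
      (rcases h1 with h1|h1|h1|h1 <;> rcases h2 with h2|h2|h2|h2 <;>
        (rw [Prod.ext_iff] at h1 h2 ⊢; simp at h1 h2 ⊢ <;> omega))
  -- image of -v is -(f v)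
  have hneg : ∀ v, IsGen v → f (-v) = - f v := by
    intro v hv
    have hgv := hgen v hv
    have hgv' := hgen (-v) (by rcases hv with h|h|h|h <;> subst h <;> simp [IsGen, Prod.ext_iff] <;> omega)
    have hq1 : LatAdj (f v) (f v + f (-v)) := by rw [latAdj_iff]; simpa using hgv'
    have hq2 : LatAdj (f (-v)) (f v + f (-v)) := by
      rw [latAdj_iff]
      have : f v + f (-v) - f (-v) = f v := by ring
      rw [this]; exact hgv
    obtain ⟨r, hr⟩ := hsurj (f v + f (-v))
    rw [← hr] at hq1 hq2
    have h1 : LatAdj v r := (hadj v r).2 hq1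
    have h2 : LatAdj (-v) r := (hadj (-v) r).2 hq2
    have : r = 0 := cn_opp v hv r h1 h2
    subst this
    rw [h0] at hr
    have : f (-v) = -f v := by
      have := hr.symm
      rw [Prod.ext_iff] at this ⊢
      simp at this ⊢
      omega
    exact this
  have hBA : f (0,1) ≠ f (1,0) := fun h => by
    have := hinj h
    simp [Prod.ext_iff] at this
  have hBA' : f (0,1) ≠ -f (1,0) := by
    intro h
    have h1 : f (-(1,0)) = -f (1,0) := hneg (1,0) (by left; rfl)
    have : f (0,1) = f (-(1,0)) := by rw [h1, h]
    have := hinj this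
    simp [Prod.ext_iff] at this
  refine ⟨?_, hgA, hgB, hBA, hBA'⟩
  have linj := linj hgA hgB hBA hBA'
  have ladjL := ladjL hgA hgB
  have main : ∀ k : ℕ, ∀ p : ℤ × ℤ, p.1.natAbs + p.2.natAbs ≤ k →
      f p = lmap (f (1,0)) (f (0,1)) p := by
    intro k
    induction k with
    | zero =>
      intro p hp
      have : p = 0 := by rw [Prod.ext_iff]; constructor <;> simp <;> omega
      subst this
      simp [h0, lmap]
      rfl
    | succ k IH =>
      intro p hp
      by_cases hk : p.1.natAbs + p.2.natAbs ≤ k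
      · exact IH p hk
      have hp1 : p.1.natAbs + p.2.natAbs = k + 1 := by omega
      by_cases hk0 : k = 0
      · -- p is a generator
        subst hk0
        have hpg : IsGen p := by
          simp only [IsGen, Prod.ext_iff]
          omega
        rcases hpg with h|h|h|h <;> subst h
        · simp [lmap]
        · have e : ((-1,0) : ℤ × ℤ) = -(1,0) := by simp [Prod.ext_iff]
          rw [e, hneg _ (by left; rfl)]
          simp [lmap, Prod.ext_iff]
        · simp [lmap]
        · have e : ((0,-1) : ℤ × ℤ) = -(0,1) := by simp [Prod.ext_iff]
          rw [e, hneg _ (by right; right; left; rfl)]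
          simp [lmap, Prod.ext_iff]
      have hk1 : 1 ≤ k := by omega
      -- the mixed (off-axis) case
      have mixed : ∀ q : ℤ × ℤ, q.1 ≠ 0 → q.2 ≠ 0 → q.1.natAbs + q.2.natAbs = k + 1 →
          f q = lmap (f (1,0)) (f (0,1)) q := by
        rintro ⟨n, m⟩ h1 h2 hn
        simp only at h1 h2 hn
        obtain ⟨s, hs, hs2⟩ : ∃ s : ℤ, (s = 1 ∨ s = -1) ∧ (n - s).natAbs + 1 = n.natAbs := by
          refine ⟨if 0 < n then 1 else -1, ?_, ?_⟩ <;> split <;> omega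
        obtain ⟨t, ht, ht2⟩ : ∃ t : ℤ, (t = 1 ∨ t = -1) ∧ (m - t).natAbs + 1 = m.natAbs := by
          refine ⟨if 0 < m then 1 else -1, ?_, ?_⟩ <;> split <;> omega
        have hq1 : f (n - s, m) = lmap (f (1,0)) (f (0,1)) (n - s, m) := IH _ (by simp; omega)
        have hq2 : f (n, m - t) = lmap (f (1,0)) (f (0,1)) (n, m - t) := IH _ (by simp; omega)
        have hr : f (n - s, m - t) = lmap (f (1,0)) (f (0,1)) (n - s, m - t) := IH _ (by simp; omega)
        obtain ⟨w, hw⟩ := hsurj (lmap (f (1,0)) (f (0,1)) (n, m))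
        have a1 : LatAdj (n - s, m) w := by
          refine (hadj _ _).2 ?_
          rw [hw, hq1]
          refine ladjL _ _ ?_
          rw [latAdj_iff]; simp only [IsGen, Prod.ext_iff]; simp; omega
        have a2 : LatAdj (n, m - t) w := by
          refine (hadj _ _).2 ?_
          rw [hw, hq2]
          refine ladjL _ _ ?_
          rw [latAdj_iff]; simp only [IsGen, Prod.ext_iff]; simp; omega
        have hw' : w = (n, m) ∨ w = (n - s, m - t) := by
          rw [latAdj_iff] at a1 a2
          simp only [IsGen, Prod.ext_iff] at a1 a2 ⊢
          simp at a1 a2 ⊢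
          omega
        rcases hw' with h|h
        · rw [← h, hw, h]
        · exfalso
          rw [h] at hw
          rw [hr] at hw
          have := linj _ _ hw
          rw [Prod.ext_iff] at this
          simp at this
          omega
      rcases eq_or_ne p.2 0 with h2 | h2
      · -- horizontal axis
        obtain ⟨n, m⟩ := p
        simp only at h2 hp1
        subst h2
        simp only [Int.natAbs_zero, add_zero] at hp1
        obtain ⟨s, hs, hs2⟩ : ∃ s : ℤ, (s = 1 ∨ s = -1) ∧ (n - s).natAbs + 1 = n.natAbs := by
          refine ⟨if 0 < n then 1 else -1, ?_, ?_⟩ <;> split <;> omega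
        have hq : f (n - s, 0) = lmap (f (1,0)) (f (0,1)) (n - s, 0) := IH _ (by simp; omega)
        obtain ⟨w, hw⟩ := hsurj (lmap (f (1,0)) (f (0,1)) (n, 0))
        have a1 : LatAdj (n - s, 0) w := by
          refine (hadj _ _).2 ?_
          rw [hw, hq]
          refine ladjL _ _ ?_
          rw [latAdj_iff]; simp only [IsGen, Prod.ext_iff]; simp; omega
        have hww : w = (n - s, 0) + (1,0) ∨ w = (n - s, 0) + (-1,0) ∨
            w = (n - s, 0) + (0,1) ∨ w = (n - s, 0) + (0,-1) := a1
        have key : w = (n, 0) := by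
          rcases hww with h|h|h|h <;> subst h <;>
            simp only [Prod.mk_add_mk, add_zero, zero_add] at *
          · rcases hs with h|h
            · subst h; simp [Prod.ext_iff]
            · exfalso
              have hfw : f (n - s + 1, 0) = lmap (f (1,0)) (f (0,1)) (n - s + 1, 0) := by
                subst h; exact IH _ (by simp; omega)
              rw [hfw] at hw
              have := linj _ _ hw
              rw [Prod.ext_iff] at this; simp at this; omega
          · rcases hs with h|h
            · exfalso
              have hfw : f (n - s + -1, 0) = lmap (f (1,0)) (f (0,1)) (n - s + -1, 0) := by
                subst h; exact IH _ (by simp; omega)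
              rw [hfw] at hw
              have := linj _ _ hw
              rw [Prod.ext_iff] at this; simp at this; omega
            · subst h; simp [Prod.ext_iff]
          · exfalso
            have hfw : f (n - s, 1) = lmap (f (1,0)) (f (0,1)) (n - s, 1) :=
              mixed _ (by omega) (by omega) (by simp; omega)
            rw [hfw] at hw
            have := linj _ _ hw
            rw [Prod.ext_iff] at this; simp at this
          · exfalso
            have hfw : f (n - s, -1) = lmap (f (1,0)) (f (0,1)) (n - s, -1) :=
              mixed _ (by omega) (by omega) (by simp; omega)
            rw [hfw] at hw
            have := linj _ _ hw
            rw [Prod.ext_iff] at this; simp at this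
        rw [← key, hw, key]
      rcases eq_or_ne p.1 0 with h1 | h1
      · -- vertical axis
        obtain ⟨n, m⟩ := p
        simp only at h1 h2 hp1
        subst h1
        simp only [Int.natAbs_zero, zero_add] at hp1
        obtain ⟨t, ht, ht2⟩ : ∃ t : ℤ, (t = 1 ∨ t = -1) ∧ (m - t).natAbs + 1 = m.natAbs := by
          refine ⟨if 0 < m then 1 else -1, ?_, ?_⟩ <;> split <;> omega
        have hq : f (0, m - t) = lmap (f (1,0)) (f (0,1)) (0, m - t) := IH _ (by simp; omega)
        obtain ⟨w, hw⟩ := hsurj (lmap (f (1,0)) (f (0,1)) (0, m))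
        have a1 : LatAdj (0, m - t) w := by
          refine (hadj _ _).2 ?_
          rw [hw, hq]
          refine ladjL _ _ ?_
          rw [latAdj_iff]; simp only [IsGen, Prod.ext_iff]; simp; omega
        have hww : w = (0, m - t) + (1,0) ∨ w = (0, m - t) + (-1,0) ∨
            w = (0, m - t) + (0,1) ∨ w = (0, m - t) + (0,-1) := a1
        have key : w = (0, m) := by
          rcases hww with h|h|h|h <;> subst h <;>
            simp only [Prod.mk_add_mk, add_zero, zero_add] at *
          · exfalso
            have hfw : f (1, m - t) = lmap (f (1,0)) (f (0,1)) (1, m - t) :=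
              mixed _ (by omega) (by omega) (by simp; omega)
            rw [hfw] at hw
            have := linj _ _ hw
            rw [Prod.ext_iff] at this; simp at this
          · exfalso
            have hfw : f (-1, m - t) = lmap (f (1,0)) (f (0,1)) (-1, m - t) :=
              mixed _ (by omega) (by omega) (by simp; omega)
            rw [hfw] at hw
            have := linj _ _ hw
            rw [Prod.ext_iff] at this; simp at this
          · rcases ht with h|h
            · subst h; simp [Prod.ext_iff]
            · exfalso
              have hfw : f (0, m - t + 1) = lmap (f (1,0)) (f (0,1)) (0, m - t + 1) := by
                subst h; exact IH _ (by simp; omega)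
              rw [hfw] at hw
              have := linj _ _ hw
              rw [Prod.ext_iff] at this; simp at this; omega
          · rcases ht with h|h
            · exfalso
              have hfw : f (0, m - t + -1) = lmap (f (1,0)) (f (0,1)) (0, m - t + -1) := by
                subst h; exact IH _ (by simp; omega)
              rw [hfw] at hw
              have := linj _ _ hw
              rw [Prod.ext_iff] at this; simp at this; omega
            · subst h; simp [Prod.ext_iff]
        rw [← key, hw, key]
      · exact mixed p h1 h2 hp1
  intro p
  exact main (p.1.natAbs + p.2.natAbs) p le_rfl

end rigid

section perm
open Equiv

lemma mem_latAut_iff {g : Equiv.Perm (ℤ × ℤ)} :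
    g ∈ latAut ↔ ∀ p q, LatAdj p q ↔ LatAdj (g p) (g q) := Iff.rfl

lemma perm_rigid {g : Equiv.Perm (ℤ × ℤ)} (hg : g ∈ latAut) (h0 : g 0 = 0) :
    (∀ p, g p = lmap (g (1,0)) (g (0,1)) p) ∧ IsGen (g (1,0)) ∧ IsGen (g (0,1)) ∧
      g (0,1) ≠ g (1,0) ∧ g (0,1) ≠ -g (1,0) :=
  rigid g.injective g.surjective (mem_latAut_iff.1 hg) h0

lemma perm_add {g : Equiv.Perm (ℤ × ℤ)} (hg : g ∈ latAut) (h0 : g 0 = 0) (p u : ℤ × ℤ) :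
    g (p + u) = g p + g u := by
  have h := (perm_rigid hg h0).1
  rw [h (p + u), h p, h u, lmap_add]

lemma trAut_apply (v p : ℤ × ℤ) : trAut v p = v + p := rfl

lemma trAut_mem_latAut (v : ℤ × ℤ) : trAut v ∈ latAut := by
  rw [mem_latAut_iff]
  intro p q
  rw [latAdj_iff, latAdj_iff]
  have : trAut v q - trAut v p = q - p := by
    simp [trAut_apply]
  rw [this]

lemma trAut_mul (u w : ℤ × ℤ) : trAut u * trAut w = trAut (u + w) := by
  refine Equiv.ext fun p => ?_
  simp only [Equiv.Perm.mul_apply, trAut_apply]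
  ring

lemma trAut_zero : trAut 0 = 1 := by
  refine Equiv.ext fun p => ?_
  simp [trAut_apply]

lemma trAut_inv (v : ℤ × ℤ) : (trAut v)⁻¹ = trAut (-v) := by
  rw [eq_comm, eq_inv_iff_mul_eq_one, trAut_mul]
  simp [trAut_zero]

lemma trAut_eq_one {v : ℤ × ℤ} (h : trAut v = 1) : v = 0 := by
  have := congrArg (fun e : Equiv.Perm (ℤ × ℤ) => e 0) h
  simpa [trAut_apply] using this

lemma perm_comm_trAut {g : Equiv.Perm (ℤ × ℤ)} (hg : g ∈ latAut) (h0 : g 0 = 0) (u : ℤ × ℤ) :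
    g * trAut u = trAut (g u) * g := by
  refine Equiv.ext fun p => ?_
  simp only [Equiv.Perm.mul_apply, trAut_apply]
  rw [show u + p = p + u from add_comm u p, perm_add hg h0]
  ring

lemma latAut_formula {g : Equiv.Perm (ℤ × ℤ)} (hg : g ∈ latAut) (p : ℤ × ℤ) :
    g p = g 0 + lmap (g (1,0) - g 0) (g (0,1) - g 0) p := by
  set h : Equiv.Perm (ℤ × ℤ) := (trAut (g 0))⁻¹ * g with hh
  have hmem : h ∈ latAut := Subgroup.mul_mem _ (Subgroup.inv_mem _ (trAut_mem_latAut _)) hg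
  have happ : ∀ q, h q = -(g 0) + g q := by
    intro q
    simp [hh, trAut_inv, Equiv.Perm.mul_apply, trAut_apply]
  have h0 : h 0 = 0 := by rw [happ]; ring
  have := ((perm_rigid hmem h0).1) p
  rw [happ, happ, happ] at this
  have e1 : -g 0 + g (1,0) = g (1,0) - g 0 := by ring
  have e2 : -g 0 + g (0,1) = g (0,1) - g 0 := by ring
  rw [e1, e2] at this
  have : g p = g 0 + lmap (g (1,0) - g 0) (g (0,1) - g 0) p := by
    rw [← this]; ring
  exact this

lemma latAut_countable : Set.Countable (latAut : Set (Equiv.Perm (ℤ × ℤ))) := by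
  have hinj : Set.InjOn (fun g : Equiv.Perm (ℤ × ℤ) => (g 0, g (1,0), g (0,1)))
      (latAut : Set (Equiv.Perm (ℤ × ℤ))) := by
    intro g hg g' hg' h
    simp only [Prod.mk.injEq] at h
    refine Equiv.ext fun p => ?_
    rw [latAut_formula hg p, latAut_formula hg' p, h.1, h.2.1, h.2.2]
  exact Set.countable_of_injective_of_countable_image hinj (Set.to_countable _)

end perm

section shift

lemma shiftI_one (x : (ℤ × ℤ) → unitInterval) : shiftI 1 x = x := by
  funext p; simp [shiftI]

lemma shiftI_mul (g h : Equiv.Perm (ℤ × ℤ)) (x : (ℤ × ℤ) → unitInterval) :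
    shiftI (g * h) x = shiftI g (shiftI h x) := by
  funext p; simp [shiftI, Equiv.Perm.mul_apply]

lemma frSet_shift {g : Equiv.Perm (ℤ × ℤ)} (hg : g ∈ latAut)
    {x : (ℤ × ℤ) → unitInterval} (hx : x ∈ FrSet) : shiftI g x ∈ FrSet := by
  intro h hh hne heq
  refine hx (g⁻¹ * h * g) ?_ ?_ ?_
  · exact Subgroup.mul_mem _ (Subgroup.mul_mem _ (Subgroup.inv_mem _ hg) hh) hg
  · intro e
    apply hne
    have : h * g = g := by
      have := congrArg (fun z => g * z) e
      simpa [mul_assoc] using this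
    have h1g : h * g = 1 * g := by simpa using this
    simpa using mul_right_cancel h1g
  · rw [shiftI_mul, shiftI_mul, heq, ← shiftI_mul, inv_mul_cancel, shiftI_one]

/-- translation action on the free part -/
def trp (v : ℤ × ℤ) (x : FrPt) : FrPt :=
  ⟨shiftI (trAut v) x.1, frSet_shift (trAut_mem_latAut v) x.2⟩

lemma trp_trp (v w : ℤ × ℤ) (x : FrPt) : trp v (trp w x) = trp (v + w) x := by
  apply Subtype.ext
  show shiftI (trAut v) (shiftI (trAut w) x.1) = shiftI (trAut (v + w)) x.1
  rw [← shiftI_mul, trAut_mul]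

lemma trp_zero (x : FrPt) : trp 0 x = x := by
  apply Subtype.ext
  show shiftI (trAut 0) x.1 = x.1
  rw [trAut_zero, shiftI_one]

/-- action of a lattice automorphism on the free part -/
def gact {g : Equiv.Perm (ℤ × ℤ)} (hg : g ∈ latAut) (x : FrPt) : FrPt :=
  ⟨shiftI g x.1, frSet_shift hg x.2⟩

lemma measurable_shiftI (g : Equiv.Perm (ℤ × ℤ)) :
    Measurable (shiftI g) :=
  measurable_pi_lambda _ fun p => measurable_pi_apply _

lemma frSet_measurable : MeasurableSet FrSet := by
  have he : FrSet = ⋂ g ∈ {g : Equiv.Perm (ℤ × ℤ) | g ∈ latAut ∧ g ≠ 1},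
      {x | shiftI g x ≠ x} := by
    ext x
    simp only [FrSet, Set.mem_setOf_eq, Set.mem_iInter]
    constructor
    · intro h g hg; exact h g hg.1 hg.2
    · intro h g hg hg1; exact h g ⟨hg, hg1⟩
  rw [he]
  refine MeasurableSet.biInter (latAut_countable.mono fun g hg => hg.1) fun g _ => ?_
  have : MeasurableSet {x : (ℤ × ℤ) → unitInterval | shiftI g x = x} :=
    MeasureTheory.StronglyMeasurable.measurableSet_eq_fun
      (measurable_shiftI g).stronglyMeasurable measurable_id.stronglyMeasurable
  exact this.compl

end shift

section gamma

variable {Γ : Subgroup (Equiv.Perm (ℤ × ℤ))}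

lemma g_linear (hΓ : Γ ≤ latAut) (hfix : ∀ γ ∈ Γ, γ (0 : ℤ × ℤ) = 0)
    {γ : Equiv.Perm (ℤ × ℤ)} (hγ : γ ∈ Γ) (p : ℤ × ℤ) :
    γ p = lmap (γ (1,0)) (γ (0,1)) p :=
  (perm_rigid (hΓ hγ) (hfix γ hγ)).1 p

lemma g_gen (hΓ : Γ ≤ latAut) (hfix : ∀ γ ∈ Γ, γ (0 : ℤ × ℤ) = 0)
    {γ : Equiv.Perm (ℤ × ℤ)} (hγ : γ ∈ Γ) {v : ℤ × ℤ} (hv : IsGen v) :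
    IsGen (γ v) := by
  have h0 : LatAdj 0 v := by rw [latAdj_iff]; simpa using hv
  have := (mem_latAut_iff.1 (hΓ hγ) 0 v).1 h0
  rw [hfix γ hγ, latAdj_iff] at this
  simpa using this

lemma g_comm (hΓ : Γ ≤ latAut) (hfix : ∀ γ ∈ Γ, γ (0 : ℤ × ℤ) = 0)
    {γ : Equiv.Perm (ℤ × ℤ)} (hγ : γ ∈ Γ) (u : ℤ × ℤ) :
    γ * trAut u = trAut (γ u) * γ :=
  perm_comm_trAut (hΓ hγ) (hfix γ hγ) u

lemma genSet_finite : Set.Finite {v : ℤ × ℤ | IsGen v} := by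
  have : {v : ℤ × ℤ | IsGen v} ⊆ {((1:ℤ),(0:ℤ)), ((-1:ℤ),(0:ℤ)), ((0:ℤ),(1:ℤ)), ((0:ℤ),(-1:ℤ))} := by
    intro v hv
    simpa [IsGen] using hv
  exact Set.Finite.subset (Set.toFinite _) this

lemma gamma_finite (hΓ : Γ ≤ latAut) (hfix : ∀ γ ∈ Γ, γ (0 : ℤ × ℤ) = 0) :
    Set.Finite (Γ : Set (Equiv.Perm (ℤ × ℤ))) := by
  have hinj : Set.InjOn (fun γ : Equiv.Perm (ℤ × ℤ) => (γ (1,0), γ (0,1)))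
      (Γ : Set (Equiv.Perm (ℤ × ℤ))) := by
    intro γ hγ δ hδ h
    simp only [Prod.mk.injEq] at h
    refine Equiv.ext fun p => ?_
    rw [g_linear hΓ hfix hγ p, g_linear hΓ hfix hδ p, h.1, h.2]
  have himg : Set.Finite ((fun γ : Equiv.Perm (ℤ × ℤ) => (γ (1,0), γ (0,1))) ''
      (Γ : Set (Equiv.Perm (ℤ × ℤ)))) := by
    refine Set.Finite.subset (Set.Finite.prod genSet_finite genSet_finite) ?_
    rintro _ ⟨γ, hγ, rfl⟩
    exact ⟨g_gen hΓ hfix hγ (by left; rfl), g_gen hΓ hfix hγ (by right; right; left; rfl)⟩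
  exact Set.Finite.of_finite_image himg hinj

/-- the quotient map -/
def qmk (Γ : Subgroup (Equiv.Perm (ℤ × ℤ))) (x : FrPt) : Quotient (frSetoid Γ) :=
  Quotient.mk (frSetoid Γ) x

lemma qmk_eq_iff {x y : FrPt} :
    qmk Γ x = qmk Γ y ↔ ∃ γ ∈ Γ, shiftI γ x.val = y.val :=
  ⟨fun h => Quotient.exact h, fun h => Quotient.sound h⟩

lemma qmk_gact (hΓ : Γ ≤ latAut) {γ : Equiv.Perm (ℤ × ℤ)} (hγ : γ ∈ Γ) (x : FrPt) :
    qmk Γ (gact (hΓ hγ) x) = qmk Γ x := by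
  rw [qmk_eq_iff]
  refine ⟨γ⁻¹, Subgroup.inv_mem _ hγ, ?_⟩
  show shiftI γ⁻¹ (shiftI γ x.1) = x.1
  rw [← shiftI_mul, inv_mul_cancel, shiftI_one]

lemma qmk_trp_inj (hΓ : Γ ≤ latAut) (hfix : ∀ γ ∈ Γ, γ (0 : ℤ × ℤ) = 0)
    {u w : ℤ × ℤ} {x : FrPt}
    (h : qmk Γ (trp u x) = qmk Γ (trp w x)) : u = w := by
  obtain ⟨γ, hγ, heq⟩ := qmk_eq_iff.1 h
  have key : shiftI ((trAut w)⁻¹ * γ * trAut u) x.val = x.val := by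
    rw [shiftI_mul, shiftI_mul]
    show shiftI (trAut w)⁻¹ (shiftI γ (shiftI (trAut u) x.1)) = x.1
    have heq' : shiftI γ (shiftI (trAut u) x.1) = shiftI (trAut w) x.1 := heq
    rw [heq']
    show shiftI (trAut w)⁻¹ (shiftI (trAut w) x.1) = x.1
    rw [← shiftI_mul, inv_mul_cancel, shiftI_one]
  have hmem : (trAut w)⁻¹ * γ * trAut u ∈ latAut :=
    Subgroup.mul_mem _ (Subgroup.mul_mem _ (Subgroup.inv_mem _ (trAut_mem_latAut w)) (hΓ hγ))
      (trAut_mem_latAut u)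
  rcases eq_or_ne ((trAut w)⁻¹ * γ * trAut u) 1 with he | hne
  · have h1 : (trAut w)⁻¹ * γ = (trAut u)⁻¹ := mul_eq_one_iff_eq_inv.1 he
    have h2 : γ = trAut (w - u) := by
      have h3 : γ = trAut w * (trAut u)⁻¹ := by
        rw [← h1, ← mul_assoc, mul_inv_cancel, one_mul]
      rw [h3, trAut_inv, trAut_mul, show w + -u = w - u from by ring]
    have h4 := hfix γ hγ
    rw [h2, trAut_apply, add_zero] at h4
    have : w = u := by rwa [sub_eq_zero] at h4
    exact this.symm
  · exact absurd key (x.2 _ hmem hne)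

end gamma

end NS


namespace NS
open Paper

section schreier

variable {Γ : Subgroup (Equiv.Perm (ℤ × ℤ))}

/-- reachability relation for the `ℤ²`-action on the quotient -/
def Rch (a : ℤ × ℤ → Quotient (frSetoid Γ) → Quotient (frSetoid Γ))
    (x : FrPt) (g u : ℤ × ℤ) : Prop :=
  a g (qmk Γ x) = qmk Γ (trp u x)

lemma mem_stdGen_iff {v : ℤ × ℤ} : v ∈ stdGen ↔ IsGen v := by
  simp [stdGen, IsGen]

variable {a : ℤ × ℤ → Quotient (frSetoid Γ) → Quotient (frSetoid Γ)}

lemma stilde_edge_iff (hΓ : Γ ≤ latAut) (hfix : ∀ γ ∈ Γ, γ (0 : ℤ × ℤ) = 0) (x : FrPt) (q : Quotient (frSetoid Γ)) :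
    (qmk Γ x, q) ∈ Stilde Γ ↔ ∃ w, IsGen w ∧ q = qmk Γ (trp w x) := by
  constructor
  · rintro ⟨y, v, hv, hvfr, h1, h2⟩
    have h1' : qmk Γ x = qmk Γ y := h1
    obtain ⟨γ, hγ, hxy⟩ := qmk_eq_iff.1 h1'
    have hy : y = gact (hΓ hγ) x := Subtype.ext hxy.symm
    refine ⟨γ⁻¹ v, g_gen hΓ hfix (Subgroup.inv_mem _ hγ) (mem_stdGen_iff.1 hv), ?_⟩
    have h2' : q = qmk Γ (trp v y) := h2
    rw [h2', hy]
    apply qmk_eq_iff.2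
    refine ⟨γ⁻¹, Subgroup.inv_mem _ hγ, ?_⟩
    show shiftI γ⁻¹ (shiftI (trAut v) (shiftI γ x.1)) = shiftI (trAut (γ⁻¹ v)) x.1
    rw [← shiftI_mul, ← shiftI_mul]
    have hcm := g_comm hΓ hfix (Subgroup.inv_mem _ hγ) v
    have hmm : γ⁻¹ * trAut v * γ = trAut (γ⁻¹ v) := by
      calc γ⁻¹ * trAut v * γ = trAut (γ⁻¹ v) * γ⁻¹ * γ := by rw [hcm]
      _ = trAut (γ⁻¹ v) := by rw [mul_assoc, inv_mul_cancel, mul_one]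
    rw [hmm]
  · rintro ⟨w, hw, rfl⟩
    exact ⟨x, w, mem_stdGen_iff.2 hw, (trp w x).2, rfl, rfl⟩

lemma schreier_mem (haG : Stilde Γ = {p | ∃ g ∈ stdGen, p.2 = a g p.1}) (g : ℤ × ℤ) (hg : g ∈ stdGen) (q : Quotient (frSetoid Γ)) :
    (q, a g q) ∈ Stilde Γ := by
  rw [haG]; exact ⟨g, hg, rfl⟩

lemma Rch_zero (ha0 : ∀ q : Quotient (frSetoid Γ), a 0 q = q) (x : FrPt) : Rch a x 0 0 := by
  unfold Rch
  rw [ha0, trp_zero]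

lemma reach_gen (hΓ : Γ ≤ latAut) (hfix : ∀ γ ∈ Γ, γ (0 : ℤ × ℤ) = 0)
    (haG : Stilde Γ = {p | ∃ g ∈ stdGen, p.2 = a g p.1})
    (haadd : ∀ g h q, a (g + h) q = a g (a h q)) {x : FrPt} {g u : ℤ × ℤ} (hR : Rch a x g u) {e : ℤ × ℤ} (he : IsGen e) :
    ∃ w, IsGen w ∧ Rch a x (e + g) (w + u) := by
  have h1 : a (e + g) (qmk Γ x) = a e (qmk Γ (trp u x)) := by rw [haadd, hR]
  have h2 : (qmk Γ (trp u x), a e (qmk Γ (trp u x))) ∈ Stilde Γ :=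
    schreier_mem haG e (mem_stdGen_iff.2 he) _
  rw [stilde_edge_iff hΓ hfix] at h2
  obtain ⟨w, hw, h3⟩ := h2
  refine ⟨w, hw, ?_⟩
  unfold Rch
  rw [h1, h3, trp_trp]

lemma Rch_total (hΓ : Γ ≤ latAut) (hfix : ∀ γ ∈ Γ, γ (0 : ℤ × ℤ) = 0)
    (haG : Stilde Γ = {p | ∃ g ∈ stdGen, p.2 = a g p.1})
    (ha0 : ∀ q : Quotient (frSetoid Γ), a 0 q = q)
    (haadd : ∀ g h q, a (g + h) q = a g (a h q))
    (x : FrPt) : ∀ g, ∃ u, Rch a x g u := by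
  suffices H : ∀ n : ℕ, ∀ g : ℤ × ℤ, g.1.natAbs + g.2.natAbs ≤ n → ∃ u, Rch a x g u from
    fun g => H _ g le_rfl
  intro n
  induction n with
  | zero =>
    intro g hg
    have : g = 0 := by rw [Prod.ext_iff]; constructor <;> simp <;> omega
    subst this
    exact ⟨0, Rch_zero ha0 x⟩
  | succ n IH =>
    intro g hg
    by_cases h : g.1.natAbs + g.2.natAbs ≤ n
    · exact IH g h
    obtain ⟨e, he, hn⟩ : ∃ e : ℤ × ℤ, IsGen e ∧ (g - e).1.natAbs + (g - e).2.natAbs ≤ n := by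
      by_cases h1 : 0 < g.1
      · exact ⟨(1,0), Or.inl rfl, by simp; omega⟩
      by_cases h2 : g.1 < 0
      · exact ⟨(-1,0), Or.inr (Or.inl rfl), by simp; omega⟩
      by_cases h3 : 0 < g.2
      · exact ⟨(0,1), Or.inr (Or.inr (Or.inl rfl)), by simp; omega⟩
      · exact ⟨(0,-1), Or.inr (Or.inr (Or.inr rfl)), by simp; omega⟩
    obtain ⟨u, hu⟩ := IH (g - e) hn
    obtain ⟨w, hw, hR⟩ := reach_gen hΓ hfix haG haadd hu he
    rw [show e + (g - e) = g from by ring] at hR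
    exact ⟨w + u, hR⟩

lemma Rch_fun (hΓ : Γ ≤ latAut) (hfix : ∀ γ ∈ Γ, γ (0 : ℤ × ℤ) = 0) {x : FrPt} {g u u' : ℤ × ℤ} (h1 : Rch a x g u) (h2 : Rch a x g u') : u = u' :=
  qmk_trp_inj hΓ hfix (h1.symm.trans h2)

lemma Rch_ginj (haadd : ∀ g h q, a (g + h) q = a g (a h q))
    (hafree : ∀ (g : ℤ × ℤ) q, a g q = q → g = 0) {x : FrPt} {g g' u : ℤ × ℤ} (h1 : Rch a x g u) (h2 : Rch a x g' u) : g = g' := by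
  have key : a (g - g') (a g' (qmk Γ x)) = a g' (qmk Γ x) := by
    rw [← haadd, show g - g' + g' = g from by ring, h1, h2]
  have := hafree _ _ key
  have : g = g' := by
    rwa [sub_eq_zero] at this
  exact this

lemma Rch_trans (haadd : ∀ g h q, a (g + h) q = a g (a h q)) {x : FrPt} {g h u v : ℤ × ℤ} (h1 : Rch a x g u) (h2 : Rch a (trp u x) h v) :
    Rch a x (h + g) (v + u) := by
  unfold Rch
  rw [haadd, h1, h2, trp_trp]

lemma Rch_surj (hΓ : Γ ≤ latAut) (hfix : ∀ γ ∈ Γ, γ (0 : ℤ × ℤ) = 0)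
    (haG : Stilde Γ = {p | ∃ g ∈ stdGen, p.2 = a g p.1})
    (ha0 : ∀ q : Quotient (frSetoid Γ), a 0 q = q)
    (haadd : ∀ g h q, a (g + h) q = a g (a h q))
    (x : FrPt) : ∀ u, ∃ g, Rch a x g u := by
  suffices H : ∀ n : ℕ, ∀ u : ℤ × ℤ, u.1.natAbs + u.2.natAbs ≤ n → ∃ g, Rch a x g u from
    fun u => H _ u le_rfl
  intro n
  induction n with
  | zero =>
    intro u hu
    have : u = 0 := by rw [Prod.ext_iff]; constructor <;> simp <;> omega
    subst this
    exact ⟨0, Rch_zero ha0 x⟩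
  | succ n IH =>
    intro u hu
    by_cases h : u.1.natAbs + u.2.natAbs ≤ n
    · exact IH u h
    obtain ⟨e, he, hn⟩ : ∃ e : ℤ × ℤ, IsGen e ∧ (u - e).1.natAbs + (u - e).2.natAbs ≤ n := by
      by_cases h1 : 0 < u.1
      · exact ⟨(1,0), Or.inl rfl, by simp; omega⟩
      by_cases h2 : u.1 < 0
      · exact ⟨(-1,0), Or.inr (Or.inl rfl), by simp; omega⟩
      by_cases h3 : 0 < u.2
      · exact ⟨(0,1), Or.inr (Or.inr (Or.inl rfl)), by simp; omega⟩
      · exact ⟨(0,-1), Or.inr (Or.inr (Or.inr rfl)), by simp; omega⟩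
    obtain ⟨g', hg'⟩ := IH (u - e) hn
    have hedge : (qmk Γ (trp (u - e) x), qmk Γ (trp u x)) ∈ Stilde Γ := by
      rw [stilde_edge_iff hΓ hfix]
      refine ⟨e, he, ?_⟩
      rw [trp_trp, show e + (u - e) = u from by ring]
    rw [haG] at hedge
    obtain ⟨e', he', heq⟩ := hedge
    simp only at heq
    refine ⟨e' + g', ?_⟩
    unfold Rch at hg' ⊢
    rw [haadd, hg']
    exact heq.symm

end schreier

section cc

variable {Γ : Subgroup (Equiv.Perm (ℤ × ℤ))}
  {a : ℤ × ℤ → Quotient (frSetoid Γ) → Quotient (frSetoid Γ)}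
  {c : FrPt → (ℤ × ℤ) → ℤ × ℤ}

lemma cc_eq (hΓ : Γ ≤ latAut) (hfix : ∀ γ ∈ Γ, γ (0 : ℤ × ℤ) = 0)
    (hc : ∀ x g, Rch a x g (c x g)) {x : FrPt} {g u : ℤ × ℤ} (h : Rch a x g u) :
    c x g = u :=
  Rch_fun hΓ hfix (hc x g) h

lemma cc_rigid (hΓ : Γ ≤ latAut) (hfix : ∀ γ ∈ Γ, γ (0 : ℤ × ℤ) = 0)
    (haG : Stilde Γ = {p | ∃ g ∈ stdGen, p.2 = a g p.1})
    (ha0 : ∀ q : Quotient (frSetoid Γ), a 0 q = q)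
    (haadd : ∀ g h q, a (g + h) q = a g (a h q))
    (hafree : ∀ (g : ℤ × ℤ) q, a g q = q → g = 0)
    (hc : ∀ x g, Rch a x g (c x g)) (x : FrPt) :
    (∀ p, c x p = lmap (c x (1,0)) (c x (0,1)) p) ∧ IsGen (c x (1,0)) ∧ IsGen (c x (0,1)) ∧
      c x (0,1) ≠ c x (1,0) ∧ c x (0,1) ≠ -c x (1,0) := by
  have hinj : Function.Injective (c x) := by
    intro g g' h
    exact Rch_ginj haadd hafree (hc x g) (h ▸ hc x g')
  have hsurj : Function.Surjective (c x) := by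
    intro u
    obtain ⟨g, hg⟩ := Rch_surj hΓ hfix haG ha0 haadd x u
    exact ⟨g, cc_eq hΓ hfix hc hg⟩
  have hzero : c x 0 = 0 := cc_eq hΓ hfix hc (Rch_zero ha0 x)
  have hadj : ∀ p q, LatAdj p q ↔ LatAdj (c x p) (c x q) := by
    intro p q
    constructor
    · intro hpq
      rw [latAdj_iff] at hpq
      obtain ⟨w, hw, hR⟩ := reach_gen hΓ hfix haG haadd (hc x p) hpq
      rw [show q - p + p = q from by ring] at hR
      have : c x q = w + c x p := cc_eq hΓ hfix hc hR
      rw [latAdj_iff, this, add_sub_cancel_right]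
      exact hw
    · intro hpq
      rw [latAdj_iff] at hpq
      have hedge : (qmk Γ (trp (c x p) x), qmk Γ (trp (c x q) x)) ∈ Stilde Γ := by
        rw [stilde_edge_iff hΓ hfix]
        refine ⟨c x q - c x p, hpq, ?_⟩
        rw [trp_trp, show c x q - c x p + c x p = c x q from by ring]
      rw [haG] at hedge
      obtain ⟨e', he', heq⟩ := hedge
      simp only at heq
      have hR : Rch a x (e' + p) (c x q) := by
        unfold Rch
        have := hc x p
        unfold Rch at this
        rw [haadd, this]
        exact heq.symm
      have := Rch_ginj haadd hafree (hc x q) hR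
      rw [latAdj_iff, this, add_sub_cancel_right]
      exact mem_stdGen_iff.1 he'
  exact rigid hinj hsurj hadj hzero

lemma cc_add (hΓ : Γ ≤ latAut) (hfix : ∀ γ ∈ Γ, γ (0 : ℤ × ℤ) = 0)
    (haG : Stilde Γ = {p | ∃ g ∈ stdGen, p.2 = a g p.1})
    (ha0 : ∀ q : Quotient (frSetoid Γ), a 0 q = q)
    (haadd : ∀ g h q, a (g + h) q = a g (a h q))
    (hafree : ∀ (g : ℤ × ℤ) q, a g q = q → g = 0)
    (hc : ∀ x g, Rch a x g (c x g)) (x : FrPt) (g h : ℤ × ℤ) :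
    c x (g + h) = c x g + c x h := by
  have hl := (cc_rigid hΓ hfix haG ha0 haadd hafree hc x).1
  rw [hl (g + h), hl g, hl h, lmap_add]

lemma cc_trp (hΓ : Γ ≤ latAut) (hfix : ∀ γ ∈ Γ, γ (0 : ℤ × ℤ) = 0)
    (haG : Stilde Γ = {p | ∃ g ∈ stdGen, p.2 = a g p.1})
    (ha0 : ∀ q : Quotient (frSetoid Γ), a 0 q = q)
    (haadd : ∀ g h q, a (g + h) q = a g (a h q))
    (hafree : ∀ (g : ℤ × ℤ) q, a g q = q → g = 0)
    (hc : ∀ x g, Rch a x g (c x g)) (x : FrPt) (w g : ℤ × ℤ) :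
    c (trp w x) g = c x g := by
  obtain ⟨h, hh⟩ := Rch_surj hΓ hfix haG ha0 haadd x w
  have h1 : Rch a x (g + h) (c (trp w x) g + w) := Rch_trans haadd hh (hc (trp w x) g)
  have h2 : c x (g + h) = c (trp w x) g + w := cc_eq hΓ hfix hc h1
  have h3 : c x (g + h) = c x g + c x h := cc_add hΓ hfix haG ha0 haadd hafree hc x g h
  have h4 : c x h = w := cc_eq hΓ hfix hc hh
  rw [h3, h4] at h2
  exact (add_right_cancel h2.symm)

lemma cc_gact (hΓ : Γ ≤ latAut) (hfix : ∀ γ ∈ Γ, γ (0 : ℤ × ℤ) = 0)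
    (hc : ∀ x g, Rch a x g (c x g)) {γ : Equiv.Perm (ℤ × ℤ)} (hγ : γ ∈ Γ)
    (x : FrPt) (g : ℤ × ℤ) :
    c (gact (hΓ hγ) x) g = γ (c x g) := by
  refine cc_eq hΓ hfix hc ?_
  unfold Rch
  rw [qmk_gact hΓ hγ x]
  have h1 := hc x g
  unfold Rch at h1
  rw [h1]
  apply qmk_eq_iff.2
  refine ⟨γ, hγ, ?_⟩
  show shiftI γ (shiftI (trAut (c x g)) x.1) = shiftI (trAut (γ (c x g))) (shiftI γ x.1)
  rw [← shiftI_mul, ← shiftI_mul, g_comm hΓ hfix hγ]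

end cc

section meas

abbrev Pt := (ℤ × ℤ) → unitInterval

variable {Γ : Subgroup (Equiv.Perm (ℤ × ℤ))}

/-- quotient measurable structure -/
abbrev QMS (Γ : Subgroup (Equiv.Perm (ℤ × ℤ))) : MeasurableSpace (Quotient (frSetoid Γ)) :=
  MeasurableSpace.map (Quotient.mk (frSetoid Γ)) inferInstance

lemma measurable_qmk : @Measurable _ _ _ (QMS Γ) (qmk Γ) := fun _ hs => hs

lemma measurable_trp (v : ℤ × ℤ) : Measurable (trp v) :=
  Measurable.subtype_mk ((measurable_shiftI (trAut v)).comp measurable_subtype_coe)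

/-- a rational cylinder condition -/
def cylCond (x : Pt) (t : (ℤ × ℤ) × ℚ × ℚ) : Prop :=
  (t.2.1 : ℝ) < (x t.1 : ℝ) ∧ (x t.1 : ℝ) < (t.2.2 : ℝ)

def cyl (j : List ((ℤ × ℤ) × ℚ × ℚ)) : Set Pt := {x | ∀ t ∈ j, cylCond x t}

lemma cyl_meas (j : List ((ℤ × ℤ) × ℚ × ℚ)) : MeasurableSet (cyl j) := by
  have he : cyl j = ⋂ t ∈ {t | t ∈ j}, {x : Pt | cylCond x t} := by
    ext x; simp [cyl]
  rw [he]
  refine MeasurableSet.biInter (Set.Finite.countable (List.finite_toSet j)) fun t _ => ?_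
  have hm : Measurable fun x : Pt => (x t.1 : ℝ) :=
    continuous_subtype_val.measurable.comp (measurable_pi_apply t.1)
  exact (measurableSet_lt measurable_const hm).inter (measurableSet_lt hm measurable_const)

/-- `Γ`-saturation of a cylinder -/
def satCyl (Γ : Subgroup (Equiv.Perm (ℤ × ℤ))) (j : List ((ℤ × ℤ) × ℚ × ℚ)) : Set Pt :=
  {x | ∃ γ ∈ Γ, shiftI γ x ∈ cyl j}

lemma satCyl_inv {j : List ((ℤ × ℤ) × ℚ × ℚ)} {γ : Equiv.Perm (ℤ × ℤ)} (hγ : γ ∈ Γ) {x : Pt}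
    (hx : x ∈ satCyl Γ j) : shiftI γ x ∈ satCyl Γ j := by
  obtain ⟨δ, hδ, hmem⟩ := hx
  refine ⟨δ * γ⁻¹, Subgroup.mul_mem _ hδ (Subgroup.inv_mem _ hγ), ?_⟩
  rw [← shiftI_mul, mul_assoc, inv_mul_cancel, mul_one]
  exact hmem

lemma satCyl_meas (hΓ : Γ ≤ latAut) (hfix : ∀ γ ∈ Γ, γ (0 : ℤ × ℤ) = 0)
    (j : List ((ℤ × ℤ) × ℚ × ℚ)) : MeasurableSet (satCyl Γ j) := by
  have he : satCyl Γ j = ⋃ γ ∈ (Γ : Set (Equiv.Perm (ℤ × ℤ))), (shiftI γ) ⁻¹' (cyl j) := by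
    ext x; simp [satCyl, Set.mem_iUnion]
  rw [he]
  exact MeasurableSet.biUnion ((gamma_finite hΓ hfix).countable) fun γ _ =>
    (cyl_meas j).preimage (measurable_shiftI γ)

/-- a separating family of invariant sets in the quotient -/
def qSet (Γ : Subgroup (Equiv.Perm (ℤ × ℤ))) (j : List ((ℤ × ℤ) × ℚ × ℚ)) :
    Set (Quotient (frSetoid Γ)) :=
  {q | ∃ x : FrPt, qmk Γ x = q ∧ x.val ∈ satCyl Γ j}

lemma qmk_mem_qSet_iff {x : FrPt} {j : List ((ℤ × ℤ) × ℚ × ℚ)} :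
    qmk Γ x ∈ qSet Γ j ↔ x.val ∈ satCyl Γ j := by
  constructor
  · rintro ⟨y, hy, hmem⟩
    obtain ⟨γ, hγ, heq⟩ := qmk_eq_iff.1 hy
    rw [← heq]
    exact satCyl_inv hγ hmem
  · intro h
    exact ⟨x, rfl, h⟩

lemma qSet_meas (hΓ : Γ ≤ latAut) (hfix : ∀ γ ∈ Γ, γ (0 : ℤ × ℤ) = 0)
    (j : List ((ℤ × ℤ) × ℚ × ℚ)) : @MeasurableSet _ (QMS Γ) (qSet Γ j) := by
  show MeasurableSet ((Quotient.mk (frSetoid Γ)) ⁻¹' (qSet Γ j))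
  have he : (Quotient.mk (frSetoid Γ)) ⁻¹' (qSet Γ j) =
      Subtype.val ⁻¹' (satCyl Γ j) := by
    ext x
    exact qmk_mem_qSet_iff
  rw [he]
  exact (satCyl_meas hΓ hfix j).preimage measurable_subtype_coe

lemma exists_cyl_separating (x : Pt) {S : Set Pt} (hS : S.Finite) (hx : x ∉ S) :
    ∃ j, x ∈ cyl j ∧ ∀ z ∈ S, z ∉ cyl j := by
  revert hx
  refine Set.Finite.induction_on
    (motive := fun T _ => x ∉ T → ∃ j, x ∈ cyl j ∧ ∀ z ∈ T, z ∉ cyl j) S hS ?_ ?_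
  · intro _
    exact ⟨[], fun t ht => absurd ht List.not_mem_nil,
      fun z hz => absurd hz (Set.notMem_empty z)⟩
  · intro z S hzS hSfin IH hx
    have hxz : x ≠ z := fun h => hx (h ▸ Set.mem_insert z S)
    have hxS : x ∉ S := fun h => hx (Set.mem_insert_of_mem z h)
    obtain ⟨j, hxj, hj⟩ := IH hxS
    obtain ⟨p, hp⟩ : ∃ p, x p ≠ z p := Function.ne_iff.1 hxz
    have hpr : (x p : ℝ) ≠ (z p : ℝ) := fun h => hp (Subtype.coe_injective h)
    rcases lt_or_gt_of_ne hpr with hlt | hgt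
    · -- x p < z p : take rational between them, lower bound -1
      obtain ⟨q, hq1, hq2⟩ := exists_rat_btwn hlt
      refine ⟨(p, -1, q) :: j, ?_, ?_⟩
      · intro t ht
        rcases List.mem_cons.1 ht with h | h
        · subst h
          constructor
          · push_cast
            have := (x p).2.1
            linarith
          · exact_mod_cast hq1
        · exact hxj t h
      · intro w hw hmem
        rcases Set.mem_insert_iff.1 hw with h | h
        · subst h
          have := (hmem (p, -1, q) List.mem_cons_self).2
          have h2 : (q : ℝ) < (w p : ℝ) := hq2
          linarith
        · exact hj w h fun t ht => hmem t (List.mem_cons_of_mem _ ht)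
    · -- z p < x p
      obtain ⟨q, hq1, hq2⟩ := exists_rat_btwn hgt
      refine ⟨(p, q, 2) :: j, ?_, ?_⟩
      · intro t ht
        rcases List.mem_cons.1 ht with h | h
        · subst h
          constructor
          · exact_mod_cast hq2
          · push_cast
            have := (x p).2.2
            linarith
        · exact hxj t h
      · intro w hw hmem
        rcases Set.mem_insert_iff.1 hw with h | h
        · subst h
          have := (hmem (p, q, 2) List.mem_cons_self).1
          have h2 : (w p : ℝ) < (q : ℝ) := hq1
          linarith
        · exact hj w h fun t ht => hmem t (List.mem_cons_of_mem _ ht)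

lemma qSet_separates (hΓ : Γ ≤ latAut) (hfix : ∀ γ ∈ Γ, γ (0 : ℤ × ℤ) = 0)
    {x y : FrPt} (h : qmk Γ x ≠ qmk Γ y) :
    ∃ j, qmk Γ x ∈ qSet Γ j ∧ qmk Γ y ∉ qSet Γ j := by
  set S : Set Pt := (fun γ : Equiv.Perm (ℤ × ℤ) => shiftI γ y.val) '' (Γ : Set _) with hS
  have hSfin : S.Finite := Set.Finite.image _ (gamma_finite hΓ hfix)
  have hxS : x.val ∉ S := by
    rintro ⟨γ, hγ, heq⟩
    exact h.symm (qmk_eq_iff.2 ⟨γ, hγ, heq⟩)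
  obtain ⟨j, hxj, hj⟩ := exists_cyl_separating x.val hSfin hxS
  refine ⟨j, qmk_mem_qSet_iff.2 ⟨1, Subgroup.one_mem _, by rwa [shiftI_one]⟩, ?_⟩
  intro hmem
  obtain ⟨γ, hγ, hmem'⟩ := qmk_mem_qSet_iff.1 hmem
  exact hj _ ⟨γ, hγ, rfl⟩ hmem'

lemma measurableSet_eq_q (hΓ : Γ ≤ latAut) (hfix : ∀ γ ∈ Γ, γ (0 : ℤ × ℤ) = 0)
    {f g : FrPt → Quotient (frSetoid Γ)}
    (hf : @Measurable _ _ _ (QMS Γ) f) (hg : @Measurable _ _ _ (QMS Γ) g) :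
    MeasurableSet {x | f x = g x} := by
  have he : {x | f x = g x} =
      ⋂ j : List ((ℤ × ℤ) × ℚ × ℚ), {x | f x ∈ qSet Γ j ↔ g x ∈ qSet Γ j} := by
    ext x
    simp only [Set.mem_setOf_eq, Set.mem_iInter]
    constructor
    · intro h j; rw [h]
    · intro h
      by_contra hne
      obtain ⟨x₁, hx₁⟩ := Quotient.exists_rep (f x)
      obtain ⟨x₂, hx₂⟩ := Quotient.exists_rep (g x)
      have hne' : qmk Γ x₁ ≠ qmk Γ x₂ := by
        show Quotient.mk (frSetoid Γ) x₁ ≠ Quotient.mk (frSetoid Γ) x₂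
        rw [hx₁, hx₂]; exact hne
      obtain ⟨j, hin, hout⟩ := qSet_separates hΓ hfix hne'
      have := h j
      rw [show f x = qmk Γ x₁ from hx₁.symm, show g x = qmk Γ x₂ from hx₂.symm] at this
      exact hout (this.1 hin)
  rw [he]
  refine MeasurableSet.iInter fun j => ?_
  have hd : {x | f x ∈ qSet Γ j ↔ g x ∈ qSet Γ j} =
      (f ⁻¹' qSet Γ j ∩ g ⁻¹' qSet Γ j) ∪ ((f ⁻¹' qSet Γ j)ᶜ ∩ (g ⁻¹' qSet Γ j)ᶜ) := by
    ext x
    by_cases h1 : f x ∈ qSet Γ j <;> by_cases h2 : g x ∈ qSet Γ j <;>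
      simp [h1, h2]
  rw [hd]
  exact ((hf (qSet_meas hΓ hfix j)).inter (hg (qSet_meas hΓ hfix j))).union
    (((hf (qSet_meas hΓ hfix j)).compl).inter ((hg (qSet_meas hΓ hfix j)).compl))

end meas

section baire

/-- the shift homeomorphism of the product space -/
def shiftHomeo (g : Equiv.Perm (ℤ × ℤ)) : Pt ≃ₜ Pt where
  toFun := shiftI g
  invFun := shiftI g⁻¹
  left_inv := fun x => by rw [← shiftI_mul, inv_mul_cancel, shiftI_one]
  right_inv := fun x => by rw [← shiftI_mul, mul_inv_cancel, shiftI_one]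
  continuous_toFun := continuous_pi fun p => continuous_apply _
  continuous_invFun := continuous_pi fun p => continuous_apply _

lemma shiftI_continuous (g : Equiv.Perm (ℤ × ℤ)) : Continuous (shiftI g) :=
  (shiftHomeo g).continuous

lemma shiftI_isOpenMap (g : Equiv.Perm (ℤ × ℤ)) : IsOpenMap (shiftI g) :=
  (shiftHomeo g).isOpenMap

/-- the set of injective configurations -/
def InjSet : Set Pt := {x | Function.Injective x}

lemma injSet_residual : InjSet ∈ residual Pt := by
  have he : InjSet = ⋂ pq ∈ {pq : (ℤ × ℤ) × (ℤ × ℤ) | pq.1 ≠ pq.2},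
      {x : Pt | x pq.1 ≠ x pq.2} := by
    ext x
    simp only [InjSet, Set.mem_setOf_eq, Set.mem_iInter]
    constructor
    · intro h pq hpq heq
      exact hpq (h heq)
    · intro h p q heq
      by_contra hne
      exact h (p, q) hne heq
  rw [he]
  rw [countable_bInter_mem (Set.to_countable _)]
  intro pq hpq
  apply residual_of_dense_open
  · have : {x : Pt | x pq.1 ≠ x pq.2} = {x : Pt | x pq.1 = x pq.2}ᶜ := rfl
    rw [this]
    exact (isClosed_eq (continuous_apply pq.1) (continuous_apply pq.2)).isOpen_compl
  · rw [dense_iff_inter_open]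
    intro U hU hUne
    obtain ⟨z, hz⟩ := hUne
    by_cases hzi : z pq.1 ≠ z pq.2
    · exact ⟨z, hz, hzi⟩
    push_neg at hzi
    -- perturb coordinate pq.2
    set f : unitInterval → Pt := fun t r => if r = pq.2 then t else z r with hf
    have hfc : Continuous f := by
      apply continuous_pi
      intro r
      by_cases hr : r = pq.2 <;> simp [hf, hr] <;> fun_prop
    have hfz : f (z pq.2) = z := by
      funext r
      by_cases hr : r = pq.2 <;> simp [hf, hr]
    have hV : IsOpen (f ⁻¹' U) := hU.preimage hfc
    have hVz : z pq.2 ∈ f ⁻¹' U := by rw [Set.mem_preimage, hfz]; exact hz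
    have hvne : ∃ t ∈ f ⁻¹' U, t ≠ z pq.1 := by
      by_contra hno
      push_neg at hno
      have hsub : f ⁻¹' U = {z pq.1} := by
        apply Set.eq_singleton_iff_unique_mem.2
        exact ⟨by rwa [← hzi] at hVz, fun t ht => hno t ht⟩
      have hclop : IsClopen {z pq.1} := ⟨isClosed_singleton, hsub ▸ hV⟩
      have : ConnectedSpace unitInterval := inferInstance
      have huniv := hclop.eq_univ (Set.singleton_nonempty _)
      have h0 : (0 : unitInterval) ∈ ({z pq.1} : Set unitInterval) := huniv ▸ Set.mem_univ _
      have h1 : (1 : unitInterval) ∈ ({z pq.1} : Set unitInterval) := huniv ▸ Set.mem_univ _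
      rw [Set.mem_singleton_iff] at h0 h1
      have : (0 : unitInterval) = 1 := h0.trans h1.symm
      have := congrArg (Subtype.val) this
      norm_num at this
    obtain ⟨t, htU, htne⟩ := hvne
    refine ⟨f t, htU, ?_⟩
    show f t pq.1 ≠ f t pq.2
    have h1 : f t pq.1 = z pq.1 := by simp only [hf]; rw [if_neg hpq]
    have h2 : f t pq.2 = t := by simp [hf]
    rw [h1, h2]
    exact fun h => htne h.symm

lemma inj_mem_frSet {x : Pt} (hx : Function.Injective x) : x ∈ FrSet := by
  intro g hg hg1 heq
  apply hg1
  have hfix : ∀ p, g⁻¹ p = p := by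
    intro p
    have : x (g⁻¹ p) = x p := congrFun heq p
    exact hx this
  refine Equiv.ext fun q => ?_
  have := hfix (g q)
  rw [show g⁻¹ (g q) = q from g.symm_apply_apply q] at this
  rw [Equiv.Perm.one_apply]
  exact this.symm

lemma open_not_meagre {U : Set Pt} (hU : IsOpen U) (hne : U.Nonempty) (h : IsMeagre U) :
    False := by
  have hd : Dense Uᶜ := dense_of_mem_residual h
  obtain ⟨z, hz1, hz2⟩ := dense_iff_inter_open.1 hd U hU hne
  exact hz2 hz1

lemma meagre_biUnion_finite {ι : Type*} {S : Set ι} (hS : S.Countable) {f : ι → Set Pt}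
    (h : ∀ i ∈ S, IsMeagre (f i)) : IsMeagre (⋃ i ∈ S, f i) := by
  unfold IsMeagre
  rw [Set.compl_iUnion₂]
  rw [countable_bInter_mem hS]
  exact h

end baire

end NS


namespace NS
open Paper

lemma fix_two {A B c1 c2 : ℤ × ℤ} (hg1 : IsGen c1) (hg2 : IsGen c2)
    (hne1 : c2 ≠ c1) (hne2 : c2 ≠ -c1)
    (hf1 : lmap A B c1 = c1) (hf2 : lmap A B c2 = c2) : A = (1,0) ∧ B = (0,1) := by
  rcases hg1 with h|h|h|h <;> subst h <;> rcases hg2 with h|h|h|h <;> subst h <;>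
    simp [lmap, Prod.ext_iff] at hf1 hf2 hne1 hne2 ⊢ <;> omega

lemma lmap_id (p : ℤ × ℤ) : lmap (1,0) (0,1) p = p := by
  simp [lmap]

end NS

open Paper
open NS

/-- For a nontrivial subgroup `Γ` of `Aut(Cay(ℤ², E))` fixing `0` and closed under
conjugation by translations, the graph `S̃_Γ`, with the quotient Borel structure on
`Fr_Γ/Γ`, is not the Schreier graph of a free Borel action of `ℤ²`. -/
theorem Stilde_not_schreier (Γ : Subgroup (Equiv.Perm (ℤ × ℤ)))
    (hΓAut : Γ ≤ latAut) (hΓnontriv : Γ ≠ ⊥)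
    (hfix : ∀ γ ∈ Γ, γ (0 : ℤ × ℤ) = 0)
    (hconj : ∀ γ ∈ Γ, ∀ v : ℤ × ℤ, (trAut (γ v))⁻¹ * γ * trAut v ∈ Γ) :
    ¬ (letI : MeasurableSpace (Quotient (frSetoid Γ)) :=
        MeasurableSpace.map (Quotient.mk (frSetoid Γ)) inferInstance
       IsSchreierZ2 (Stilde Γ)) := by
  intro h
  obtain ⟨a, hameas, ha0, haadd, hafree, haG⟩ := h
  classical
  have ha0' : ∀ q : Quotient (frSetoid Γ), a 0 q = q := ha0
  have haadd' : ∀ g h q, a (g + h) q = a g (a h q) := haadd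
  have hafree' : ∀ (g : ℤ × ℤ) q, a g q = q → g = 0 := hafree
  have haG' : Stilde Γ = {p | ∃ g ∈ stdGen, p.2 = a g p.1} := haG
  choose cfun hcfun using fun (x : FrPt) (g : ℤ × ℤ) =>
    Rch_total hΓAut hfix haG' ha0' haadd' x g
  obtain ⟨γ₀, hγ₀Γ, hγ₀ne⟩ : ∃ γ ∈ Γ, γ ≠ 1 := by
    by_contra hno
    push_neg at hno
    exact hΓnontriv ((Subgroup.eq_bot_iff_forall Γ).2 hno)
  set D : (ℤ × ℤ) × (ℤ × ℤ) → Set Pt := fun d =>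
    Subtype.val '' {x : FrPt | cfun x (1,0) = d.1 ∧ cfun x (0,1) = d.2} with hD
  have mem_D_iff : ∀ (z : Pt) d, z ∈ D d ↔
      ∃ hz : z ∈ FrSet, cfun ⟨z, hz⟩ (1,0) = d.1 ∧ cfun ⟨z, hz⟩ (0,1) = d.2 := by
    intro z d
    constructor
    · rintro ⟨⟨xv, hxv⟩, hx, rfl⟩
      exact ⟨hxv, hx.1, hx.2⟩
    · rintro ⟨hz, h1, h2⟩
      exact ⟨⟨z, hz⟩, ⟨h1, h2⟩, rfl⟩
  have hlevel : ∀ (g u : ℤ × ℤ), MeasurableSet {x : FrPt | cfun x g = u} := by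
    intro g u
    have he : {x : FrPt | cfun x g = u} =
        {x : FrPt | a g (qmk Γ x) = qmk Γ (trp u x)} := by
      ext x
      constructor
      · intro hx
        have h2 := hcfun x g
        unfold Rch at h2
        rw [hx] at h2
        exact h2
      · intro hx
        exact cc_eq hΓAut hfix hcfun hx
    rw [he]
    exact measurableSet_eq_q hΓAut hfix
      ((hameas g).comp measurable_qmk) (measurable_qmk.comp (measurable_trp u))
  have hDborel : ∀ d, MeasurableSet (D d) := by
    intro d
    refine (MeasurableEmbedding.subtype_coe frSet_measurable).measurableSet_image' ?_
    have he : {x : FrPt | cfun x (1,0) = d.1 ∧ cfun x (0,1) = d.2} =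
        {x : FrPt | cfun x (1,0) = d.1} ∩ {x : FrPt | cfun x (0,1) = d.2} := rfl
    rw [he]
    exact (hlevel _ _).inter (hlevel _ _)
  have hDtrp1 : ∀ d u (z : Pt), z ∈ D d → shiftI (trAut u) z ∈ D d := by
    intro d u z hz
    rw [mem_D_iff] at hz ⊢
    obtain ⟨hzf, h1, h2⟩ := hz
    have hzf' : shiftI (trAut u) z ∈ FrSet := frSet_shift (trAut_mem_latAut u) hzf
    refine ⟨hzf', ?_, ?_⟩
    · show cfun (trp u ⟨z, hzf⟩) (1,0) = d.1
      rw [cc_trp hΓAut hfix haG' ha0' haadd' hafree' hcfun]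
      exact h1
    · show cfun (trp u ⟨z, hzf⟩) (0,1) = d.2
      rw [cc_trp hΓAut hfix haG' ha0' haadd' hafree' hcfun]
      exact h2
  have hDtrp : ∀ d u (z : Pt), shiftI (trAut u) z ∈ D d ↔ z ∈ D d := by
    intro d u z
    constructor
    · intro hz
      have h2 := hDtrp1 d (-u) _ hz
      rwa [← shiftI_mul, trAut_mul, neg_add_cancel, trAut_zero, shiftI_one] at h2
    · exact hDtrp1 d u z
  have hDgact : ∀ {γ : Equiv.Perm (ℤ × ℤ)} (hγ : γ ∈ Γ) d (z : Pt),
      z ∈ D d → shiftI γ z ∈ D (γ d.1, γ d.2) := by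
    intro γ hγ d z hz
    rw [mem_D_iff] at hz ⊢
    obtain ⟨hzf, h1, h2⟩ := hz
    have hzf' : shiftI γ z ∈ FrSet := frSet_shift (hΓAut hγ) hzf
    refine ⟨hzf', ?_, ?_⟩
    · show cfun (gact (hΓAut hγ) ⟨z, hzf⟩) (1,0) = γ d.1
      rw [cc_gact hΓAut hfix hcfun hγ, h1]
    · show cfun (gact (hΓAut hγ) ⟨z, hzf⟩) (0,1) = γ d.2
      rw [cc_gact hΓAut hfix hcfun hγ, h2]
  have hDdisj : ∀ d d' (z : Pt), z ∈ D d → z ∈ D d' → d = d' := by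
    intro d d' z h1 h2
    rw [mem_D_iff] at h1 h2
    obtain ⟨hz, ha1, ha2⟩ := h1
    obtain ⟨hz', hb1, hb2⟩ := h2
    have e1 : (⟨z, hz'⟩ : FrPt) = ⟨z, hz⟩ := rfl
    rw [e1] at hb1 hb2
    rw [Prod.ext_iff]
    exact ⟨ha1.symm.trans hb1, ha2.symm.trans hb2⟩
  have hFrnm : ¬ IsMeagre FrSet := by
    intro hm
    have h1 : InjSet ∩ FrSetᶜ ∈ residual Pt := Filter.inter_mem injSet_residual hm
    obtain ⟨z, hz⟩ := (dense_of_mem_residual h1).nonempty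
    exact hz.2 (inj_mem_frSet hz.1)
  have hcov : FrSet ⊆ ⋃ d ∈ ({v : ℤ × ℤ | IsGen v} ×ˢ {v : ℤ × ℤ | IsGen v}), D d := by
    intro z hz
    have hx := cc_rigid hΓAut hfix haG' ha0' haadd' hafree' hcfun ⟨z, hz⟩
    refine Set.mem_biUnion (Set.mk_mem_prod hx.2.1 hx.2.2.1) ?_
    exact (mem_D_iff z _).2 ⟨hz, rfl, rfl⟩
  have hex : ∃ d, ¬ IsMeagre (D d) := by
    by_contra hno
    push_neg at hno
    apply hFrnm
    refine IsMeagre.mono hcov ?_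
    exact meagre_biUnion_finite ((genSet_finite.prod genSet_finite).countable) fun d _ => hno d
  obtain ⟨d₀, hd₀nm⟩ := hex
  have hd₀ne : (D d₀).Nonempty := by
    rcases Set.eq_empty_or_nonempty (D d₀) with hh | hh
    · exact absurd (hh ▸ IsMeagre.empty) hd₀nm
    · exact hh
  obtain ⟨z₀, hz₀⟩ := hd₀ne
  have hd₁ : (γ₀ d₀.1, γ₀ d₀.2) ≠ d₀ := by
    intro heq
    rw [Prod.ext_iff] at heq
    obtain ⟨hzf, hc1, hc2⟩ := (mem_D_iff z₀ d₀).1 hz₀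
    obtain ⟨hlin, hg1, hg2, hne1, hne2⟩ :=
      cc_rigid hΓAut hfix haG' ha0' haadd' hafree' hcfun ⟨z₀, hzf⟩
    have f1 : γ₀ (cfun ⟨z₀, hzf⟩ (1,0)) = cfun ⟨z₀, hzf⟩ (1,0) := by
      rw [hc1]; exact heq.1
    have f2 : γ₀ (cfun ⟨z₀, hzf⟩ (0,1)) = cfun ⟨z₀, hzf⟩ (0,1) := by
      rw [hc2]; exact heq.2
    have hγlin := g_linear hΓAut hfix hγ₀Γ
    have hf1' : lmap (γ₀ (1,0)) (γ₀ (0,1)) (cfun ⟨z₀, hzf⟩ (1,0)) = cfun ⟨z₀, hzf⟩ (1,0) := by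
      rw [← hγlin]; exact f1
    have hf2' : lmap (γ₀ (1,0)) (γ₀ (0,1)) (cfun ⟨z₀, hzf⟩ (0,1)) = cfun ⟨z₀, hzf⟩ (0,1) := by
      rw [← hγlin]; exact f2
    have hAB := fix_two hg1 hg2 hne1 hne2 hf1' hf2'
    apply hγ₀ne
    refine Equiv.ext fun p => ?_
    rw [hγlin p, hAB.1, hAB.2, lmap_id, Equiv.Perm.one_apply]
  have hBM := (hDborel d₀).baireMeasurableSet
  obtain ⟨U, hUopen, hUeq⟩ := hBM.residualEq_isOpen
  have hmUD : IsMeagre (U \ D d₀) := by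
    show (U \ D d₀)ᶜ ∈ residual Pt
    refine Filter.mem_of_superset hUeq ?_
    intro x hx
    simp only [Set.mem_compl_iff, Set.mem_diff, not_and, not_not]
    intro hxU
    exact cast hx.symm hxU
  have hmDU : IsMeagre (D d₀ \ U) := by
    show (D d₀ \ U)ᶜ ∈ residual Pt
    refine Filter.mem_of_superset hUeq ?_
    intro x hx
    simp only [Set.mem_compl_iff, Set.mem_diff, not_and, not_not]
    intro hxD
    exact cast hx hxD
  have hUne : U.Nonempty := by
    rcases Set.eq_empty_or_nonempty U with hh | hh
    · exfalso
      apply hd₀nm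
      refine IsMeagre.mono ?_ hmDU
      rw [hh]
      simp
    · exact hh
  obtain ⟨x₀, hx₀U⟩ := hUne
  obtain ⟨W, hWb, hx₀W, hWU⟩ :=
    (isTopologicalBasis_pi
      fun _ : ℤ × ℤ => TopologicalSpace.isTopologicalBasis_opens).exists_subset_of_mem_open
      hx₀U hUopen
  obtain ⟨T, F, hT, rfl⟩ := hWb
  obtain ⟨u, hu⟩ : ∃ u : ℤ × ℤ, ∀ i ∈ F, γ₀ i - u ∉ (F : Set (ℤ × ℤ)) := by
    have hfin : Set.Finite ((fun p : (ℤ × ℤ) × (ℤ × ℤ) => γ₀ p.1 - p.2) ''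
        ((F : Set (ℤ × ℤ)) ×ˢ (F : Set (ℤ × ℤ)))) :=
      Set.Finite.image _ ((F.finite_toSet).prod (F.finite_toSet))
    obtain ⟨u, hu⟩ := hfin.infinite_compl.nonempty
    refine ⟨u, fun i hi hmem => hu ?_⟩
    exact ⟨(i, γ₀ i - u), ⟨hi, hmem⟩, by simp⟩
  set g₁ : Equiv.Perm (ℤ × ℤ) := γ₀⁻¹ * trAut u with hg₁
  set W₂ : Set Pt := shiftI g₁ ⁻¹' ((F : Set (ℤ × ℤ)).pi T) with hW₂
  set d₁ : (ℤ × ℤ) × (ℤ × ℤ) := (γ₀ d₀.1, γ₀ d₀.2) with hd₁def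
  have hpre : shiftI g₁ ⁻¹' (D d₀) = D d₁ := by
    ext z
    simp only [Set.mem_preimage]
    rw [hg₁, shiftI_mul]
    constructor
    · intro hmem
      have h2 := hDgact hγ₀Γ _ _ hmem
      rw [← shiftI_mul, mul_inv_cancel, shiftI_one] at h2
      exact (hDtrp _ u z).1 h2
    · intro hmem
      have h2 := (hDtrp d₁ u z).2 hmem
      have h3 := hDgact (Subgroup.inv_mem _ hγ₀Γ) _ _ h2
      rw [hd₁def] at h3
      simpa [show ∀ q, γ₀⁻¹ (γ₀ q) = q from fun q => γ₀.symm_apply_apply q] using h3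
  have hmW : IsMeagre (((F : Set (ℤ × ℤ)).pi T) \ D d₀) :=
    IsMeagre.mono (Set.diff_subset_diff_left hWU) hmUD
  have hmW₂ : IsMeagre (W₂ \ D d₁) := by
    have he : W₂ \ D d₁ = shiftI g₁ ⁻¹' (((F : Set (ℤ × ℤ)).pi T) \ D d₀) := by
      rw [Set.preimage_diff, hpre, hW₂]
    rw [he]
    exact IsMeagre.preimage_of_isOpenMap (shiftI_continuous g₁) (shiftI_isOpenMap g₁) hmW
  have hx₀pi : ∀ i ∈ F, x₀ i ∈ T i := fun i hi => hx₀W i hi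
  set zc : Pt := fun r => if r ∈ F then x₀ r else x₀ (g₁ r) with hzc
  have hzcW : zc ∈ (F : Set (ℤ × ℤ)).pi T := by
    intro i hi
    show (if i ∈ F then x₀ i else x₀ (g₁ i)) ∈ T i
    rw [if_pos (Finset.mem_coe.1 hi)]
    exact hx₀pi i hi
  have hzcW₂ : zc ∈ W₂ := by
    rw [hW₂, Set.mem_preimage]
    intro i hi
    show zc (g₁⁻¹ i) ∈ T i
    have hval : g₁⁻¹ i = γ₀ i - u := by
      rw [hg₁, mul_inv_rev, trAut_inv]
      show trAut (-u) (γ₀ i) = γ₀ i - u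
      rw [trAut_apply]
      ring
    have hni : g₁⁻¹ i ∉ F := by
      rw [hval]
      exact fun hmem => hu i hi hmem
    show (if g₁⁻¹ i ∈ F then x₀ (g₁⁻¹ i) else x₀ (g₁ (g₁⁻¹ i))) ∈ T i
    rw [if_neg (fun hmem => hni (Finset.mem_coe.2 hmem)), show g₁ (g₁⁻¹ i) = i from g₁.apply_symm_apply i]
    exact hx₀pi i hi
  have hWopen : IsOpen ((F : Set (ℤ × ℤ)).pi T) :=
    isOpen_set_pi F.finite_toSet fun i hi => hT i hi
  have hW₂open : IsOpen W₂ := hWopen.preimage (shiftI_continuous g₁)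
  set V : Set Pt := ((F : Set (ℤ × ℤ)).pi T) ∩ W₂ with hV
  have hVsub : V ⊆ (V \ D d₀) ∪ (V \ D d₁) := by
    intro v hv
    by_cases h0 : v ∈ D d₀
    · right
      exact ⟨hv, fun h1 => hd₁ (hDdisj d₁ d₀ v h1 h0)⟩
    · left
      exact ⟨hv, h0⟩
  have hVm : IsMeagre V := by
    refine IsMeagre.mono hVsub ?_
    have m1 : IsMeagre (V \ D d₀) :=
      IsMeagre.mono (Set.diff_subset_diff_left Set.inter_subset_left) hmW
    have m2 : IsMeagre (V \ D d₁) :=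
      IsMeagre.mono (Set.diff_subset_diff_left Set.inter_subset_right) hmW₂
    show ((V \ D d₀) ∪ (V \ D d₁))ᶜ ∈ residual Pt
    rw [Set.compl_union]
    exact Filter.inter_mem m1 m2
  exact open_not_meagre (hWopen.inter hW₂open) ⟨zc, hzcW, hzcW₂⟩ hVm
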